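/- Let bx₁ (state S₁, between A₁ and B₁) and bx₂ (state S₂, between A₂ and B₂) be transparent well-behaved bx over the same lawful monad m. Define the retentive sum bx on state Bool × S₁ × S₂ between A₁ ⊕ A₂ and B₁ ⊕ B₂ by: getL := gets (fun (b, s₁, s₂) => if b then Sum.inl (readL₁ s₁) else Sum.inr (readL₂ s₂)); setL (Sum.inl a₁) := do let (b, s₁, s₂) ← get; let (_, s₁') ← monadLift (setL₁ a₁ s₁); set (true, s₁', s₂); setL (Sum.inr a₂) := do let (b, s₁, s₂) ← get; let (_, s₂') ← monadLift (setL₂ a₂ s₂); set (false, s₁, s₂'); and dually getR := gets (fun (b, s₁, s₂) => if b then Sum.inl (readR₁ s₁) else Sum.inr (readR₂ s₂)), with setR defined from setR₁ and setR₂ in the same way. Then the sum bx is transparent well-behaved: it satisfies (S_LG_L) (do setL x; getL) = (do setL x; pure x) for all x : A₁ ⊕ A₂; (G_LS_L) (do let x ← getL; setL x) = pure ⟨⟩; and the dual laws (S_RG_R) and (G_RS_R). -/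
import Mathlib


universe u v

def getsS {m : Type u → Type v} [Monad m] {σ α : Type u} (f : σ → α) : StateT σ m α := do
  let s ← get
  pure (f s)

/-- A transparent bidirectional transformation over the monad `m`,
with state space `S`, between `A` and `B`. -/
structure TBX (m : Type u → Type v) (S A B : Type u) where
  readL : S → A
  readR : S → B
  setL : A → StateT S m PUnit
  setR : B → StateT S m PUnit

/-- Well-behavedness of a transparent bx: the laws (S_LG_L), (G_LS_L), (S_RG_R), (G_RS_R).
(The get–get laws hold automatically since the gets are `T`-pure queries.) -/
structure TBX.WellBehaved {m : Type u → Type v} [Monad m] {S A B : Type u}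
    (bx : TBX m S A B) : Prop where
  slgl : ∀ a : A, (do bx.setL a; getsS (m := m) bx.readL) = (do bx.setL a; pure a)
  glsl : (do let a ← getsS (m := m) bx.readL; bx.setL a) = (pure PUnit.unit : StateT S m PUnit)
  srgr : ∀ b : B, (do bx.setR b; getsS (m := m) bx.readR) = (do bx.setR b; pure b)
  grsr : (do let b ← getsS (m := m) bx.readR; bx.setR b) = (pure PUnit.unit : StateT S m PUnit)

/-- The retentive sum of two transparent bx. -/
def TBX.sum {m : Type u → Type v} [Monad m] {S₁ S₂ A₁ B₁ A₂ B₂ : Type u}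
    (bx₁ : TBX m S₁ A₁ B₁) (bx₂ : TBX m S₂ A₂ B₂) :
    TBX m (Bool × S₁ × S₂) (A₁ ⊕ A₂) (B₁ ⊕ B₂) where
  readL := fun s => if s.1 then Sum.inl (bx₁.readL s.2.1) else Sum.inr (bx₂.readL s.2.2)
  readR := fun s => if s.1 then Sum.inl (bx₁.readR s.2.1) else Sum.inr (bx₂.readR s.2.2)
  setL := fun x =>
    match x with
    | Sum.inl a₁ => do
        let (_b, s₁, s₂) ← get
        let (_, s₁') ← monadLift ((bx₁.setL a₁).run s₁)
        set ((true, s₁', s₂) : Bool × S₁ × S₂)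
    | Sum.inr a₂ => do
        let (_b, s₁, s₂) ← get
        let (_, s₂') ← monadLift ((bx₂.setL a₂).run s₂)
        set ((false, s₁, s₂') : Bool × S₁ × S₂)
  setR := fun x =>
    match x with
    | Sum.inl b₁ => do
        let (_b, s₁, s₂) ← get
        let (_, s₁') ← monadLift ((bx₁.setR b₁).run s₁)
        set ((true, s₁', s₂) : Bool × S₁ × S₂)
    | Sum.inr b₂ => do
        let (_b, s₁, s₂) ← get
        let (_, s₂') ← monadLift ((bx₂.setR b₂).run s₂)
        set ((false, s₁, s₂') : Bool × S₁ × S₂)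

theorem sum_wellBehaved
    {m : Type u → Type v} [Monad m] [LawfulMonad m] {S₁ S₂ A₁ B₁ A₂ B₂ : Type u}
    (bx₁ : TBX m S₁ A₁ B₁) (bx₂ : TBX m S₂ A₂ B₂)
    (h₁ : bx₁.WellBehaved) (h₂ : bx₂.WellBehaved) :
    (bx₁.sum bx₂).WellBehaved := by
  have slgl₁ : ∀ (a : A₁) (s : S₁),
      ((fun p => (bx₁.readL p.2, p.2)) <$> (bx₁.setL a).run s)
        = ((fun p => (a, p.2)) <$> (bx₁.setL a).run s) := by
    intro a s
    have := congrFun (h₁.slgl a) s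
    simpa [getsS, Bind.bind, StateT.bind, StateT.run, Pure.pure, StateT.pure, getThe,
      MonadState.get, MonadStateOf.get, StateT.get] using this
  have slgl₂ : ∀ (a : A₂) (s : S₂),
      ((fun p => (bx₂.readL p.2, p.2)) <$> (bx₂.setL a).run s)
        = ((fun p => (a, p.2)) <$> (bx₂.setL a).run s) := by
    intro a s
    have := congrFun (h₂.slgl a) s
    simpa [getsS, Bind.bind, StateT.bind, StateT.run, Pure.pure, StateT.pure, getThe,
      MonadState.get, MonadStateOf.get, StateT.get] using this
  have srgr₁ : ∀ (b : B₁) (s : S₁),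
      ((fun p => (bx₁.readR p.2, p.2)) <$> (bx₁.setR b).run s)
        = ((fun p => (b, p.2)) <$> (bx₁.setR b).run s) := by
    intro b s
    have := congrFun (h₁.srgr b) s
    simpa [getsS, Bind.bind, StateT.bind, StateT.run, Pure.pure, StateT.pure, getThe,
      MonadState.get, MonadStateOf.get, StateT.get] using this
  have srgr₂ : ∀ (b : B₂) (s : S₂),
      ((fun p => (bx₂.readR p.2, p.2)) <$> (bx₂.setR b).run s)
        = ((fun p => (b, p.2)) <$> (bx₂.setR b).run s) := by
    intro b s
    have := congrFun (h₂.srgr b) s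
    simpa [getsS, Bind.bind, StateT.bind, StateT.run, Pure.pure, StateT.pure, getThe,
      MonadState.get, MonadStateOf.get, StateT.get] using this
  have glsl₁ : ∀ s : S₁, bx₁.setL (bx₁.readL s) s = pure (PUnit.unit, s) := by
    intro s
    have := congrFun h₁.glsl s
    simpa [getsS, Bind.bind, StateT.bind, StateT.run, Pure.pure, StateT.pure, getThe,
      MonadState.get, MonadStateOf.get, StateT.get] using this
  have glsl₂ : ∀ s : S₂, bx₂.setL (bx₂.readL s) s = pure (PUnit.unit, s) := by
    intro s
    have := congrFun h₂.glsl s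
    simpa [getsS, Bind.bind, StateT.bind, StateT.run, Pure.pure, StateT.pure, getThe,
      MonadState.get, MonadStateOf.get, StateT.get] using this
  have grsr₁ : ∀ s : S₁, bx₁.setR (bx₁.readR s) s = pure (PUnit.unit, s) := by
    intro s
    have := congrFun h₁.grsr s
    simpa [getsS, Bind.bind, StateT.bind, StateT.run, Pure.pure, StateT.pure, getThe,
      MonadState.get, MonadStateOf.get, StateT.get] using this
  have grsr₂ : ∀ s : S₂, bx₂.setR (bx₂.readR s) s = pure (PUnit.unit, s) := by
    intro s
    have := congrFun h₂.grsr s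
    simpa [getsS, Bind.bind, StateT.bind, StateT.run, Pure.pure, StateT.pure, getThe,
      MonadState.get, MonadStateOf.get, StateT.get] using this
  refine ⟨?_, ?_, ?_, ?_⟩
  · intro x
    funext s
    obtain ⟨b, s₁, s₂⟩ := s
    cases x with
    | inl a₁ =>
      simp only [TBX.sum, getsS, Bind.bind, StateT.bind, StateT.run, Pure.pure, StateT.pure,
        getThe, MonadState.get, MonadStateOf.get, StateT.get, StateT.set, set, MonadStateOf.set,
        monadLift, MonadLift.monadLift, StateT.lift, pure_bind, bind_assoc]
      have := congrArg (fun t => (fun q : A₁ × S₁ =>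
        ((Sum.inl q.1 : A₁ ⊕ A₂), ((true, q.2, s₂) : Bool × S₁ × S₂))) <$> t) (slgl₁ a₁ s₁)
      simpa [Functor.map_map, Function.comp, StateT.run, ← bind_pure_comp] using this
    | inr a₂ =>
      simp only [TBX.sum, getsS, Bind.bind, StateT.bind, StateT.run, Pure.pure, StateT.pure,
        getThe, MonadState.get, MonadStateOf.get, StateT.get, StateT.set, set, MonadStateOf.set,
        monadLift, MonadLift.monadLift, StateT.lift, pure_bind, bind_assoc]
      have := congrArg (fun t => (fun q : A₂ × S₂ =>
        ((Sum.inr q.1 : A₁ ⊕ A₂), ((false, s₁, q.2) : Bool × S₁ × S₂))) <$> t) (slgl₂ a₂ s₂)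
      simpa [Functor.map_map, Function.comp, StateT.run, ← bind_pure_comp] using this
  · funext s
    obtain ⟨b, s₁, s₂⟩ := s
    cases b with
    | true =>
      simp [TBX.sum, getsS, Bind.bind, StateT.bind, StateT.run, Pure.pure, StateT.pure,
        getThe, MonadState.get, MonadStateOf.get, StateT.get, StateT.set, set, MonadStateOf.set,
        monadLift, MonadLift.monadLift, StateT.lift, glsl₁ s₁, ← bind_pure_comp]
    | false =>
      simp [TBX.sum, getsS, Bind.bind, StateT.bind, StateT.run, Pure.pure, StateT.pure,
        getThe, MonadState.get, MonadStateOf.get, StateT.get, StateT.set, set, MonadStateOf.set,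
        monadLift, MonadLift.monadLift, StateT.lift, glsl₂ s₂, ← bind_pure_comp]
  · intro x
    funext s
    obtain ⟨b, s₁, s₂⟩ := s
    cases x with
    | inl b₁ =>
      simp only [TBX.sum, getsS, Bind.bind, StateT.bind, StateT.run, Pure.pure, StateT.pure,
        getThe, MonadState.get, MonadStateOf.get, StateT.get, StateT.set, set, MonadStateOf.set,
        monadLift, MonadLift.monadLift, StateT.lift, pure_bind, bind_assoc]
      have := congrArg (fun t => (fun q : B₁ × S₁ =>
        ((Sum.inl q.1 : B₁ ⊕ B₂), ((true, q.2, s₂) : Bool × S₁ × S₂))) <$> t) (srgr₁ b₁ s₁)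
      simpa [Functor.map_map, Function.comp, StateT.run, ← bind_pure_comp] using this
    | inr b₂ =>
      simp only [TBX.sum, getsS, Bind.bind, StateT.bind, StateT.run, Pure.pure, StateT.pure,
        getThe, MonadState.get, MonadStateOf.get, StateT.get, StateT.set, set, MonadStateOf.set,
        monadLift, MonadLift.monadLift, StateT.lift, pure_bind, bind_assoc]
      have := congrArg (fun t => (fun q : B₂ × S₂ =>
        ((Sum.inr q.1 : B₁ ⊕ B₂), ((false, s₁, q.2) : Bool × S₁ × S₂))) <$> t) (srgr₂ b₂ s₂)
      simpa [Functor.map_map, Function.comp, StateT.run, ← bind_pure_comp] using this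
  · funext s
    obtain ⟨b, s₁, s₂⟩ := s
    cases b with
    | true =>
      simp [TBX.sum, getsS, Bind.bind, StateT.bind, StateT.run, Pure.pure, StateT.pure,
        getThe, MonadState.get, MonadStateOf.get, StateT.get, StateT.set, set, MonadStateOf.set,
        monadLift, MonadLift.monadLift, StateT.lift, grsr₁ s₁, ← bind_pure_comp]
    | false =>
      simp [TBX.sum, getsS, Bind.bind, StateT.bind, StateT.run, Pure.pure, StateT.pure,
        getThe, MonadState.get, MonadStateOf.get, StateT.get, StateT.set, set, MonadStateOf.set,
        monadLift, MonadLift.monadLift, StateT.lift, grsr₂ s₂, ← bind_pure_comp]
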